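/- Let A be an n×n symmetric matrix with nonnegative entries that is irreducible, let R be the diagonal matrix whose i-th diagonal entry is the i-th row sum of A, and let r ≥ 2 be an integer. Then μ(R + (1/(r−1))·A) ≥ (r/(r−1))·μ(A), where μ denotes the largest eigenvalue. -/

import Mathlib

open Matrix

lemma dot_eq_inner' {n : ℕ} (x y : EuclideanSpace ℝ (Fin n)) :
    (inner ℝ x y : ℝ) = (x : Fin n → ℝ) ⬝ᵥ (y : Fin n → ℝ) := by
  simp [PiLp.inner_apply, dotProduct, RCLike.inner_apply, conj_trivial, mul_comm]

lemma rayleigh_le_max' {n : ℕ} {M : Matrix (Fin n) (Fin n) ℝ} (hM : M.IsHermitian)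
    (v : EuclideanSpace ℝ (Fin n)) (hv : ‖v‖ = 1) (j : Fin n)
    (hj : ∀ k, hM.eigenvalues k ≤ hM.eigenvalues j) :
    (v : Fin n → ℝ) ⬝ᵥ (M *ᵥ v) ≤ hM.eigenvalues j := by
  set b := hM.eigenvectorBasis with hb
  have hMsymm : Mᵀ = M := by
    have h := hM
    rwa [Matrix.IsHermitian, conjTranspose_eq_transpose_of_trivial] at h
  set w : EuclideanSpace ℝ (Fin n) := WithLp.toLp 2 (M *ᵥ v : Fin n → ℝ) with hw
  have hrepr : ∀ k, b.repr w k = hM.eigenvalues k * b.repr v k := by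
    intro k
    rw [OrthonormalBasis.repr_apply_apply, OrthonormalBasis.repr_apply_apply,
      dot_eq_inner', dot_eq_inner']
    show (b k : Fin n → ℝ) ⬝ᵥ (M *ᵥ v) = _
    have hMb : M *ᵥ (b k : Fin n → ℝ) = hM.eigenvalues k • (b k : Fin n → ℝ) :=
      hM.mulVec_eigenvectorBasis k
    rw [dotProduct_mulVec, ← mulVec_transpose, hMsymm, hMb, smul_dotProduct]
    simp
  have hinner : (v : Fin n → ℝ) ⬝ᵥ (M *ᵥ v) = ∑ k, hM.eigenvalues k * (b.repr v k)^2 := by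
    rw [← dot_eq_inner', ← b.repr.inner_map_map v w, PiLp.inner_apply]
    refine Finset.sum_congr rfl fun k _ => ?_
    rw [hrepr k]
    simp [RCLike.inner_apply]
    ring
  have hpars : ∑ k, (b.repr v k)^2 = 1 := by
    have h1 : (inner ℝ v v : ℝ) = 1 := by
      rw [real_inner_self_eq_norm_sq, hv, one_pow]
    rw [← b.repr.inner_map_map v v, PiLp.inner_apply] at h1
    rw [← h1]
    refine Finset.sum_congr rfl fun k _ => ?_
    simp [RCLike.inner_apply]
  rw [hinner]
  calc ∑ k, hM.eigenvalues k * (b.repr v k)^2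
      ≤ ∑ k, hM.eigenvalues j * (b.repr v k)^2 :=
        Finset.sum_le_sum fun k _ => mul_le_mul_of_nonneg_right (hj k) (sq_nonneg _)
    _ = hM.eigenvalues j := by rw [← Finset.mul_sum, hpars, mul_one]

lemma lap_ineq' {n : ℕ} (A : Matrix (Fin n) (Fin n) ℝ) (hsym : A.IsSymm)
    (hnonneg : ∀ i j, 0 ≤ A i j) (v : Fin n → ℝ) :
    ∑ i, ∑ j, A i j * (v i * v j) ≤ ∑ i, ∑ j, A i j * (v i)^2 := by
  have h0 : 0 ≤ ∑ i, ∑ j, A i j * (v i - v j)^2 :=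
    Finset.sum_nonneg fun i _ => Finset.sum_nonneg fun j _ =>
      mul_nonneg (hnonneg i j) (sq_nonneg _)
  have hswap : ∑ i, ∑ j, A i j * (v j)^2 = ∑ i, ∑ j, A i j * (v i)^2 := by
    rw [Finset.sum_comm]
    exact Finset.sum_congr rfl fun i _ => Finset.sum_congr rfl fun j _ => by
      rw [hsym.apply]
  have hexp : ∑ i, ∑ j, A i j * (v i - v j)^2
      = (∑ i, ∑ j, A i j * (v i)^2) + (∑ i, ∑ j, A i j * (v j)^2)
        - 2 * ∑ i, ∑ j, A i j * (v i * v j) := by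
    have h : ∀ i j, A i j * (v i - v j)^2
        = A i j * (v i)^2 + A i j * (v j)^2 - 2 * (A i j * (v i * v j)) :=
      fun i j => by ring
    simp only [h, Finset.sum_sub_distrib, Finset.sum_add_distrib, Finset.mul_sum]
  linarith

/-- The largest eigenvalue of a real matrix. -/
noncomputable def maxEigR {n : ℕ} (A : Matrix (Fin n) (Fin n) ℝ) : ℝ :=
  sSup (spectrum ℝ A)

/-- A matrix is irreducible: no nontrivial coordinate subset is invariant. -/
def Irred {n : ℕ} (A : Matrix (Fin n) (Fin n) ℝ) : Prop :=
  ∀ S : Set (Fin n), S.Nonempty → S ≠ Set.univ → ∃ i ∈ S, ∃ j, j ∉ S ∧ A i j ≠ 0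

/-- For an irreducible nonnegative symmetric matrix `A` with row-sum diagonal `R`
and `r ≥ 2`, `μ(R + (1/(r−1))·A) ≥ (r/(r−1))·μ(A)`. -/
theorem stmt1 {n r : ℕ} (hr : 2 ≤ r) (A : Matrix (Fin n) (Fin n) ℝ)
    (hsym : A.IsSymm) (hnonneg : ∀ i j, 0 ≤ A i j) (hirr : Irred A) :
    maxEigR (Matrix.diagonal (fun i => ∑ j, A i j) + ((r : ℝ) - 1)⁻¹ • A) ≥
      ((r : ℝ) / ((r : ℝ) - 1)) * maxEigR A := by
  classical
  have hr2 : (2:ℝ) ≤ (r:ℝ) := by exact_mod_cast hr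
  have hr1 : (1:ℝ) ≤ (r:ℝ) - 1 := by linarith
  have hrne : (r:ℝ) - 1 ≠ 0 := by linarith
  rcases Nat.eq_zero_or_pos n with hn | hn
  · subst hn
    have hz : ∀ (B : Matrix (Fin 0) (Fin 0) ℝ), maxEigR B = 0 := by
      intro B
      have hB : B.IsHermitian := Subsingleton.elim _ _
      rw [maxEigR, Matrix.IsHermitian.spectrum_real_eq_range_eigenvalues hB,
        Set.range_eq_empty, Real.sSup_empty]
    rw [hz, hz, mul_zero]
  · haveI : Nonempty (Fin n) := Fin.pos_iff_nonempty.mp hn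
    set c : ℝ := ((r:ℝ) - 1)⁻¹ with hc
    have hc0 : 0 < c := inv_pos.mpr (by linarith)
    have hA : A.IsHermitian := by
      rwa [Matrix.IsHermitian, conjTranspose_eq_transpose_of_trivial]
    set M := Matrix.diagonal (fun i => ∑ j, A i j) + c • A with hMdef
    have hM : M.IsHermitian := by
      rw [Matrix.IsHermitian, conjTranspose_eq_transpose_of_trivial, hMdef,
        Matrix.transpose_add, Matrix.transpose_smul, hsym.eq, Matrix.diagonal_transpose]
    obtain ⟨i₀, hi₀⟩ := Finite.exists_max hA.eigenvalues
    obtain ⟨j₀, hj₀⟩ := Finite.exists_max hM.eigenvalues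
    have hmuA : maxEigR A = hA.eigenvalues i₀ := by
      rw [maxEigR, Matrix.IsHermitian.spectrum_real_eq_range_eigenvalues hA]
      exact IsGreatest.csSup_eq ⟨⟨i₀, rfl⟩, by rintro x ⟨k, rfl⟩; exact hi₀ k⟩
    have hmuM : maxEigR M = hM.eigenvalues j₀ := by
      rw [maxEigR, Matrix.IsHermitian.spectrum_real_eq_range_eigenvalues hM]
      exact IsGreatest.csSup_eq ⟨⟨j₀, rfl⟩, by rintro x ⟨k, rfl⟩; exact hj₀ k⟩
    set μ := hA.eigenvalues i₀ with hmu
    set v : EuclideanSpace ℝ (Fin n) := hA.eigenvectorBasis i₀ with hv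
    have hv1 : ‖v‖ = 1 := hA.eigenvectorBasis.orthonormal.1 i₀
    have hvv : (v : Fin n → ℝ) ⬝ᵥ (v : Fin n → ℝ) = 1 := by
      rw [← dot_eq_inner', real_inner_self_eq_norm_sq, hv1, one_pow]
    have hAv : A *ᵥ (v : Fin n → ℝ) = μ • (v : Fin n → ℝ) := hA.mulVec_eigenvectorBasis i₀
    have hvAv : (v : Fin n → ℝ) ⬝ᵥ (A *ᵥ (v : Fin n → ℝ)) = μ := by
      rw [hAv, dotProduct_smul, hvv, smul_eq_mul, mul_one]
    have hquad : (v : Fin n → ℝ) ⬝ᵥ (A *ᵥ (v : Fin n → ℝ))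
        = ∑ i, ∑ j, A i j * ((v : Fin n → ℝ) i * (v : Fin n → ℝ) j) := by
      simp only [dotProduct, Matrix.mulVec, dotProduct, Finset.mul_sum]
      exact Finset.sum_congr rfl fun i _ => Finset.sum_congr rfl fun j _ => by ring
    have hdiag : (v : Fin n → ℝ) ⬝ᵥ (Matrix.diagonal (fun i => ∑ j, A i j) *ᵥ (v : Fin n → ℝ))
        = ∑ i, ∑ j, A i j * ((v : Fin n → ℝ) i)^2 := by
      simp only [dotProduct, Matrix.mulVec_diagonal, Finset.sum_mul, Finset.mul_sum]
      exact Finset.sum_congr rfl fun i _ => Finset.sum_congr rfl fun j _ => by ring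
    have hlap := lap_ineq' A hsym hnonneg (v : Fin n → ℝ)
    have hray : (v : Fin n → ℝ) ⬝ᵥ (M *ᵥ (v : Fin n → ℝ)) ≤ hM.eigenvalues j₀ :=
      rayleigh_le_max' hM v hv1 j₀ hj₀
    have hsplit : (v : Fin n → ℝ) ⬝ᵥ (M *ᵥ (v : Fin n → ℝ))
        = (v : Fin n → ℝ) ⬝ᵥ (Matrix.diagonal (fun i => ∑ j, A i j) *ᵥ (v : Fin n → ℝ))
          + c * μ := by
      rw [hMdef, Matrix.add_mulVec, dotProduct_add, Matrix.smul_mulVec,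
        dotProduct_smul, hvAv, smul_eq_mul]
    have hfinal : (1 + c) * μ ≤ hM.eigenvalues j₀ := by
      have h1 : μ ≤ (v : Fin n → ℝ) ⬝ᵥ (Matrix.diagonal (fun i => ∑ j, A i j) *ᵥ (v : Fin n → ℝ)) := by
        rw [hdiag, ← hvAv, hquad]; exact hlap
      nlinarith [hray, hsplit]
    have hcoef : (r:ℝ) / ((r:ℝ) - 1) = 1 + c := by
      rw [hc, eq_comm]
      field_simp
      ring
    rw [hmuM, hmuA, hcoef]
    exact hfinal
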